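/- Suppose ‖∂L_v/∂θ‖ ≤ C_v, ‖∂²L/∂α∂θ‖ ≤ C, the Hessian G* satisfies μI ⪯ G*, κG* ⪯ I with 0 < κμ < 1. Then the difference between the exact implicit hypergradient (using G*⁻¹ = κΣ_{n=0}^∞(I−κG*)ⁿ) and the truncated approximation using only the first N_G+1 terms is bounded in norm by C_v · C · (1/μ)(1 − κμ)^{N_G + 1}. -/

import Mathlib

open ContinuousLinearMap in
lemma aux_sa_norm_le {m : ℕ} (T : EuclideanSpace ℝ (Fin m) →L[ℝ] EuclideanSpace ℝ (Fin m))
    (r : ℝ) (hr : 0 ≤ r)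
    (hsym : ∀ x y, (inner ℝ (T x) y : ℝ) = inner ℝ x (T y))
    (hpos : ∀ x, 0 ≤ (inner ℝ (T x) x : ℝ))
    (hub : ∀ x, (inner ℝ (T x) x : ℝ) ≤ r * ‖x‖ ^ 2) : ‖T‖ ≤ r := by
  have key : ∀ x y, (inner ℝ (T x) y : ℝ) ^ 2 ≤ (inner ℝ (T x) x : ℝ) * inner ℝ (T y) y := by
    intro x y
    have h : ∀ t : ℝ, 0 ≤ (inner ℝ (T y) y : ℝ) * (t * t) + (2 * inner ℝ (T x) y) * t
        + (inner ℝ (T x) x : ℝ) := by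
      intro t
      have h0 := hpos (x + t • y)
      have hyx : (inner ℝ (T y) x : ℝ) = inner ℝ (T x) y := by
        rw [hsym y x, real_inner_comm]
      simp only [map_add, map_smul, inner_add_left, inner_add_right, real_inner_smul_left,
        real_inner_smul_right, hyx] at h0
      ring_nf at h0 ⊢
      linarith
    have hd := discrim_le_zero h
    rw [discrim] at hd
    nlinarith [hd]
  refine T.opNorm_le_bound hr (fun x => ?_)
  by_cases hz : ‖T x‖ = 0
  · rw [hz]; positivity
  have hz' : 0 < ‖T x‖ := lt_of_le_of_ne (norm_nonneg _) (Ne.symm hz)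
  have h1 := key x (T x)
  have h2 : (inner ℝ (T x) (T x) : ℝ) = ‖T x‖ ^ 2 := real_inner_self_eq_norm_sq _
  have h3 := hub x
  have h4 := hub (T x)
  have h5 := hpos x
  have h6 := hpos (T x)
  have key2 : ‖T x‖ ^ 2 * ‖T x‖ ^ 2 ≤ (r * ‖x‖ ^ 2) * (r * ‖T x‖ ^ 2) := by
    calc ‖T x‖ ^ 2 * ‖T x‖ ^ 2 = (inner ℝ (T x) (T x) : ℝ) ^ 2 := by rw [h2]; ring
      _ ≤ (inner ℝ (T x) x : ℝ) * inner ℝ (T (T x)) (T x) := h1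
      _ ≤ (r * ‖x‖ ^ 2) * (r * ‖T x‖ ^ 2) := mul_le_mul h3 h4 h6 (h5.trans h3)
  have hz2 : 0 < ‖T x‖ ^ 2 := by positivity
  have hsq : ‖T x‖ ^ 2 ≤ (r * ‖x‖) ^ 2 := by nlinarith [key2, hz2]
  nlinarith [hsq, norm_nonneg (T x), mul_nonneg hr (norm_nonneg x)]


/-- Truncation error of the Neumann-series hypergradient: with `‖∂L_v/∂θ‖ ≤ C_v`,
`‖∂²L/∂α∂θ‖ ≤ C`, `μ I ⪯ G*`, `κ G* ⪯ I`, `0 < κ μ < 1`, the difference between the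
exact implicit hypergradient (full Neumann series) and the approximation keeping only
the first `N_G + 1` terms is bounded in norm by `C_v C (1/μ) (1 - κ μ)^{N_G + 1}`. -/
theorem stmt_7 (m p : ℕ) (Cv C μ κ : ℝ) (NG : ℕ)
    (A : EuclideanSpace ℝ (Fin m) →L[ℝ] ℝ)
    (B : EuclideanSpace ℝ (Fin p) →L[ℝ] EuclideanSpace ℝ (Fin m))
    (G : EuclideanSpace ℝ (Fin m) →L[ℝ] EuclideanSpace ℝ (Fin m))
    (Da : EuclideanSpace ℝ (Fin p) →L[ℝ] ℝ)
    (hA : ‖A‖ ≤ Cv) (hB : ‖B‖ ≤ C)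
    (hG : IsSelfAdjoint G)
    (hμ : 0 < μ) (hκ : 0 < κ) (hκμ : κ * μ < 1)
    (hlow : ∀ x : EuclideanSpace ℝ (Fin m), μ * ‖x‖ ^ 2 ≤ (inner ℝ (G x) x : ℝ))
    (hupp : ∀ x : EuclideanSpace ℝ (Fin m), (inner ℝ ((κ • G) x) x : ℝ) ≤ ‖x‖ ^ 2) :
    ‖(Da - κ • (A.comp ((∑' n : ℕ, (1 - κ • G) ^ n).comp B))) -
        (Da - κ • (A.comp ((∑ n ∈ Finset.range (NG + 1), (1 - κ • G) ^ n).comp B)))‖ ≤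
      Cv * C * (1 / μ) * (1 - κ * μ) ^ (NG + 1) := by
  set E := EuclideanSpace ℝ (Fin m)
  set T : E →L[ℝ] E := 1 - κ • G with hT
  set r : ℝ := 1 - κ * μ with hrdef
  have hr0 : 0 ≤ r := by nlinarith
  have hr1 : r < 1 := by nlinarith
  have hGsym : ∀ x y : E, (inner ℝ (G x) y : ℝ) = inner ℝ x (G y) := fun x y =>
    hG.isSymmetric x y
  have hTsym : ∀ x y : E, (inner ℝ (T x) y : ℝ) = inner ℝ x (T y) := by
    intro x y
    simp only [hT, ContinuousLinearMap.sub_apply, ContinuousLinearMap.one_apply,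
      ContinuousLinearMap.smul_apply, inner_sub_left, inner_sub_right,
      real_inner_smul_left, real_inner_smul_right, hGsym]
  have hTpos : ∀ x : E, 0 ≤ (inner ℝ (T x) x : ℝ) := by
    intro x
    have h1 := hupp x
    simp only [ContinuousLinearMap.smul_apply, real_inner_smul_left] at h1
    simp only [hT, ContinuousLinearMap.sub_apply, ContinuousLinearMap.one_apply,
      ContinuousLinearMap.smul_apply, inner_sub_left, real_inner_smul_left,
      real_inner_self_eq_norm_sq]
    erw [real_inner_smul_left]
    linarith
  have hTub : ∀ x : E, (inner ℝ (T x) x : ℝ) ≤ r * ‖x‖ ^ 2 := by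
    intro x
    have h1 := hlow x
    simp only [hT, ContinuousLinearMap.sub_apply, ContinuousLinearMap.one_apply,
      ContinuousLinearMap.smul_apply, inner_sub_left, real_inner_smul_left,
      real_inner_self_eq_norm_sq, hrdef]
    have h2 : (inner ℝ (κ • G x) x : ℝ) = κ * inner ℝ (G x) x := real_inner_smul_left _ _ _
    rw [h2]
    nlinarith
  have hTnorm : ‖T‖ ≤ r := aux_sa_norm_le T r hr0 hTsym hTpos hTub
  have hTlt : ‖T‖ < 1 := lt_of_le_of_lt hTnorm hr1
  have hsum : Summable (fun n : ℕ => T ^ n) := summable_geometric_of_norm_lt_one hTlt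
  have htail : (∑' n : ℕ, T ^ n) - (∑ n ∈ Finset.range (NG + 1), T ^ n)
      = ∑' n : ℕ, T ^ (n + (NG + 1)) := by
    rw [sub_eq_iff_eq_add, add_comm]
    exact (Summable.sum_add_tsum_nat_add (NG + 1) hsum).symm
  have hpowle : ∀ n : ℕ, ‖T ^ (n + (NG + 1))‖ ≤ r ^ (NG + 1) * r ^ n := by
    intro n
    calc ‖T ^ (n + (NG + 1))‖ ≤ ‖T‖ ^ (n + (NG + 1)) := norm_pow_le' _ (Nat.succ_pos _)
      _ ≤ r ^ (n + (NG + 1)) := pow_le_pow_left₀ (norm_nonneg _) hTnorm _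
      _ = r ^ (NG + 1) * r ^ n := by rw [pow_add, mul_comm]
  have hgeo : HasSum (fun n : ℕ => r ^ (NG + 1) * r ^ n) (r ^ (NG + 1) * (1 - r)⁻¹) :=
    (hasSum_geometric_of_lt_one hr0 hr1).mul_left _
  have htailnorm : ‖∑' n : ℕ, T ^ (n + (NG + 1))‖ ≤ r ^ (NG + 1) * (1 - r)⁻¹ :=
    tsum_of_norm_bounded hgeo hpowle
  have hlhs : (Da - κ • (A.comp ((∑' n : ℕ, T ^ n).comp B))) -
        (Da - κ • (A.comp ((∑ n ∈ Finset.range (NG + 1), T ^ n).comp B)))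
      = κ • (A.comp (((∑ n ∈ Finset.range (NG + 1), T ^ n) - ∑' n : ℕ, T ^ n).comp B)) := by
    ext x
    simp [ContinuousLinearMap.sub_apply, ContinuousLinearMap.comp_apply,
      ContinuousLinearMap.smul_apply, smul_sub, map_sub]
  rw [hlhs]
  have hC0 : 0 ≤ C := le_trans (norm_nonneg _) hB
  have hCv0 : 0 ≤ Cv := le_trans (norm_nonneg _) hA
  have hnormsub : ‖(∑ n ∈ Finset.range (NG + 1), T ^ n) - ∑' n : ℕ, T ^ n‖
      ≤ r ^ (NG + 1) * (1 - r)⁻¹ := by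
    rw [← norm_neg, neg_sub, htail]
    exact htailnorm
  calc ‖κ • (A.comp (((∑ n ∈ Finset.range (NG + 1), T ^ n) - ∑' n : ℕ, T ^ n).comp B))‖
      ≤ κ * ‖A.comp (((∑ n ∈ Finset.range (NG + 1), T ^ n) - ∑' n : ℕ, T ^ n).comp B)‖ := by
        simpa [Real.norm_eq_abs, abs_of_pos hκ] using
          ContinuousLinearMap.opNorm_smul_le κ
            (A.comp (((∑ n ∈ Finset.range (NG + 1), T ^ n) - ∑' n : ℕ, T ^ n).comp B))
    _ ≤ κ * (‖A‖ * (‖(∑ n ∈ Finset.range (NG + 1), T ^ n) - ∑' n : ℕ, T ^ n‖ * ‖B‖)) := by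
        gcongr
        exact le_trans (ContinuousLinearMap.opNorm_comp_le _ _)
          (by gcongr; exact ContinuousLinearMap.opNorm_comp_le _ _)
    _ ≤ κ * (Cv * ((r ^ (NG + 1) * (1 - r)⁻¹) * C)) := by
        gcongr
    _ = Cv * C * (κ * (1 - r)⁻¹) * r ^ (NG + 1) := by ring
    _ = Cv * C * (1 / μ) * (1 - κ * μ) ^ (NG + 1) := by
        rw [hrdef]
        have h1 : (1 - (1 - κ * μ)) = κ * μ := by ring
        rw [h1]
        field_simp
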